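/- Let G be a connected directed graph in which every vertex has total degree 2 (so G is a single cycle as an undirected graph, cyclomatic number 1) and G has no directed circuit. Then N(G) = Σ_{v minimal} x_v − Σ_{v' maximal} x_{v'}, where minimal (resp. maximal) vertices are those that are not the end (resp. origin) of any edge. -/

import Mathlib

open scoped BigOperators

/-- The field of rational functions in variables indexed by `V` over `ℚ`. -/
abbrev K (V : Type) : Type := FractionRing (MvPolynomial V ℚ)

/-- The variable `x_v` seen inside the field of rational functions. -/
noncomputable def xv {V : Type} (v : V) : K V :=
  algebraMap (MvPolynomial V ℚ) (K V) (MvPolynomial.X v)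

/-- `ψ_w = 1 / ∏ (x_{w_i} - x_{w_{i+1}})` for a word `w`. -/
noncomputable def psi {V : Type} (w : List V) : K V :=
  (((w.zip w.tail).map fun p => xv p.1 - xv p.2).prod)⁻¹

/-- The word (list of vertices) associated to an enumeration `σ` of the vertex set `W`. -/
def wordOf {V : Type} (W : Finset V) (σ : Fin W.card ≃ W) : List V :=
  (List.finRange W.card).map fun i => ((σ i : W) : V)

/-- `σ` enumerates `W` in an order compatible with all edges of `E`:
the origin of every edge appears before its end. -/
def IsExt {V : Type} (W : Finset V) (E : Finset (V × V)) (σ : Fin W.card ≃ W) : Prop :=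
  ∀ e ∈ E, ∃ i j : Fin W.card, i < j ∧ ((σ i : W) : V) = e.1 ∧ ((σ j : W) : V) = e.2

instance {V : Type} [DecidableEq V] (W : Finset V) (E : Finset (V × V)) (σ : Fin W.card ≃ W) :
    Decidable (IsExt W E σ) := by unfold IsExt; exact inferInstance

/-- `Ψ(G) = Σ_{w ∈ L(G)} ψ_w`, the sum over linear extensions of the graph with
vertex set `W` and edge set `E`. -/
noncomputable def PsiG {V : Type} [DecidableEq V] (W : Finset V) (E : Finset (V × V)) : K V :=
  ∑ σ : Fin W.card ≃ W, if IsExt W E σ then psi (wordOf W σ) else 0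

/-- `N(G) = Ψ(G) ⬝ ∏_{(a,b) ∈ E} (x_a - x_b)`. -/
noncomputable def NG {V : Type} [DecidableEq V] (W : Finset V) (E : Finset (V × V)) : K V :=
  PsiG W E * ∏ e ∈ E, (xv e.1 - xv e.2)

/-- `φ(G)`, the formal sum of the linear extensions of `G` in the free abelian
group on words. -/
noncomputable def phiG {V : Type} [DecidableEq V] (W : Finset V) (E : Finset (V × V)) :
    List V →₀ ℤ :=
  ∑ σ : Fin W.card ≃ W, if IsExt W E σ then Finsupp.single (wordOf W σ) 1 else 0

/-- The graph has no directed circuit. -/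
def Acyclic {V : Type} (E : Finset (V × V)) : Prop :=
  ∀ v : V, ¬ Relation.TransGen (fun a b => (a, b) ∈ E) v v

/-- The underlying undirected simple graph of the directed graph with edge set `E`. -/
def undirected {V : Type} (E : Finset (V × V)) : SimpleGraph V :=
  SimpleGraph.fromRel fun a b => (a, b) ∈ E

/-- The cyclically-consecutive pairs of a list of vertices. -/
def cyclePairs {V : Type} [DecidableEq V] (vs : List V) : Finset (V × V) :=
  Finset.image (fun i : Fin vs.length => (vs.get i, vs.get (finRotate _ i))) Finset.univ

/-- `vs` is (the vertex list of) a cycle of the graph `E`, whose set of forward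
edges (edges traversed in their graph orientation) is `HE`. -/
def IsCycle {V : Type} [DecidableEq V] (E : Finset (V × V)) (vs : List V)
    (HE : Finset (V × V)) : Prop :=
  2 ≤ vs.length ∧ vs.Nodup ∧ HE ⊆ cyclePairs vs ∧ HE ⊆ E ∧
    ∀ p ∈ cyclePairs vs, p ∉ HE → (p.2, p.1) ∈ E

namespace OneCycle

variable {V : Type} [DecidableEq V]

lemma xv_injective : Function.Injective (xv (V := V)) := by
  intro a b h
  have h2 := IsFractionRing.injective (MvPolynomial V ℚ) (K V) h
  exact MvPolynomial.X_injective h2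

lemma xv_sub_ne_zero {a b : V} (h : a ≠ b) : xv a - xv b ≠ 0 :=
  sub_ne_zero.mpr (fun he => h (xv_injective he))

@[simp] lemma psi_nil : psi ([] : List V) = 1 := by simp [psi]

@[simp] lemma psi_single (a : V) : psi [a] = 1 := by simp [psi]

lemma psi_cons_cons (a b : V) (t : List V) :
    psi (a :: b :: t) = (xv a - xv b)⁻¹ * psi (b :: t) := by
  simp only [psi, List.tail_cons, List.zip_cons_cons, List.map_cons, List.prod_cons, mul_inv]
  try exact mul_comm _ _

lemma key1 (z : V) : ∀ (v : List V) (m : V), (m :: v).Nodup → z ∉ m :: v →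
    ∑ k ∈ Finset.range (v.length + 1), psi (m :: v.insertIdx k z)
      = psi (m :: v) * (xv m - xv z)⁻¹ := by
  intro v
  induction v with
  | nil =>
    intro m _ hz
    simp only [List.mem_cons, not_or] at hz
    simp [psi_cons_cons]
  | cons b v' ih =>
    intro m hnd hz
    simp only [List.mem_cons, not_or] at hz
    obtain ⟨hzm, hzb, hzv⟩ := hz
    have hndb : (b :: v').Nodup := hnd.of_cons
    have hmb : m ≠ b := by intro h; subst h; simp at hnd
    have hzb' : z ∉ b :: v' := by simp [hzb, hzv]
    rw [Finset.sum_range_succ']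
    simp only [List.length_cons]
    have hstep : ∀ k ∈ Finset.range (v'.length + 1),
        psi (m :: (b :: v').insertIdx (k + 1) z)
          = (xv m - xv b)⁻¹ * psi (b :: v'.insertIdx k z) := by
      intro k _
      rw [List.insertIdx_succ_cons, psi_cons_cons]
    rw [Finset.sum_congr rfl hstep, ← Finset.mul_sum, ih b hndb hzb']
    rw [List.insertIdx_zero, psi_cons_cons, psi_cons_cons, psi_cons_cons]
    have h1 : xv m - xv b ≠ 0 := xv_sub_ne_zero hmb
    have h2 : xv m - xv z ≠ 0 := xv_sub_ne_zero (fun h => hzm h.symm)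
    have h3 : xv z - xv b ≠ 0 := xv_sub_ne_zero (fun h => hzb h)
    have h4 : xv b - xv z ≠ 0 := xv_sub_ne_zero (fun h => hzb h.symm)
    field_simp
    ring

lemma total0 (z : V) (w : List V) (hw : w ≠ []) (hnd : w.Nodup) (hz : z ∉ w) :
    ∑ k ∈ Finset.range (w.length + 1), psi (w.insertIdx k z) = 0 := by
  cases w with
  | nil => simp at hw
  | cons b t =>
    simp only [List.mem_cons, not_or] at hz
    obtain ⟨hzb, hzt⟩ := hz
    rw [Finset.sum_range_succ']
    simp only [List.length_cons]
    have hstep : ∀ k ∈ Finset.range (t.length + 1),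
        psi ((b :: t).insertIdx (k + 1) z) = psi (b :: t.insertIdx k z) := by
      intro k _; rw [List.insertIdx_succ_cons]
    rw [Finset.sum_congr rfl hstep, key1 z t b hnd (by simp [hzb, hzt])]
    rw [List.insertIdx_zero, psi_cons_cons]
    have h4 : xv b - xv z ≠ 0 := xv_sub_ne_zero (fun h => hzb h.symm)
    have h3 : xv z - xv b ≠ 0 := xv_sub_ne_zero (fun h => hzb h)
    field_simp
    ring

lemma keyA (z m : V) : ∀ (w : List V), w.Nodup → z ∉ w → m ∈ w →
    ∑ k ∈ Finset.range (w.length + 1),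
        (if w.idxOf m < k then psi (w.insertIdx k z) else 0)
      = psi w * (xv m - xv z)⁻¹ := by
  intro w
  induction w with
  | nil => simp
  | cons b t ih =>
    intro hnd hz hm
    simp only [List.mem_cons, not_or] at hz
    obtain ⟨hzb, hzt⟩ := hz
    rw [Finset.sum_range_succ']
    simp only [List.length_cons]
    rw [if_neg (Nat.not_lt_zero _), add_zero]
    by_cases hmb : m = b
    · subst hmb
      have hidx : (m :: t).idxOf m = 0 := List.idxOf_cons_self
      have hstep : ∀ k ∈ Finset.range (t.length + 1),
          (if (m :: t).idxOf m < k + 1 then psi ((m :: t).insertIdx (k+1) z) else 0)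
            = psi (m :: t.insertIdx k z) := by
        intro k _
        rw [hidx, if_pos (by omega), List.insertIdx_succ_cons]
      rw [Finset.sum_congr rfl hstep, key1 z t m hnd (by simp [hzb, hzt])]
    · have hmt : m ∈ t := by
        rcases List.mem_cons.mp hm with h | h
        · exact absurd h hmb
        · exact h
      cases t with
      | nil => simp at hmt
      | cons c t' =>
        have hidx : (b :: c :: t').idxOf m = (c :: t').idxOf m + 1 :=
          List.idxOf_cons_ne _ (fun h => hmb h.symm)
        have hstep : ∀ k ∈ Finset.range ((c :: t').length + 1),
            (if (b :: c :: t').idxOf m < k + 1 then psi ((b :: c :: t').insertIdx (k+1) z) else 0)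
              = (xv b - xv c)⁻¹ *
                (if (c :: t').idxOf m < k then psi ((c :: t').insertIdx k z) else 0) := by
          intro k hk
          rw [hidx, List.insertIdx_succ_cons]
          by_cases hc : (c :: t').idxOf m < k
          · rw [if_pos (by omega), if_pos hc]
            have hk1 : 1 ≤ k := by
              have : (c :: t').idxOf m ≥ 0 := Nat.zero_le _
              omega
            obtain ⟨k', rfl⟩ := Nat.exists_eq_add_of_le hk1
            rw [Nat.add_comm 1 k', List.insertIdx_succ_cons, psi_cons_cons]
          · rw [if_neg (by omega), if_neg hc, mul_zero]
        rw [Finset.sum_congr rfl hstep, ← Finset.mul_sum, ih hnd.of_cons hzt hmt]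
        rw [psi_cons_cons]
        ring

lemma keyB (z m : V) (w : List V) (hnd : w.Nodup) (hz : z ∉ w) (hm : m ∈ w) :
    ∑ k ∈ Finset.range (w.length + 1),
        (if w.idxOf m < k then 0 else psi (w.insertIdx k z))
      = psi w * (xv z - xv m)⁻¹ := by
  have hne : w ≠ [] := by rintro rfl; simp at hm
  have h1 := keyA z m w hnd hz hm
  have h2 := total0 z w hne hnd hz
  have h3 : ∀ k ∈ Finset.range (w.length + 1),
      psi (w.insertIdx k z)
        = (if w.idxOf m < k then psi (w.insertIdx k z) else 0)
          + (if w.idxOf m < k then 0 else psi (w.insertIdx k z)) := by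
    intro k _; by_cases hc : w.idxOf m < k <;> simp [hc]
  rw [Finset.sum_congr rfl h3, Finset.sum_add_distrib, h1] at h2
  have hzm : xv z - xv m ≠ 0 := xv_sub_ne_zero (fun h => (by rintro rfl; exact hz hm : z ≠ m) h)
  have hmz : xv m - xv z ≠ 0 := xv_sub_ne_zero (by rintro rfl; exact hz hm)
  have heq : ∑ k ∈ Finset.range (w.length + 1),
      (if w.idxOf m < k then 0 else psi (w.insertIdx k z)) = - (psi w * (xv m - xv z)⁻¹) :=
    eq_neg_of_add_eq_zero_right h2
  rw [heq]
  field_simp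
  ring

section Words

def words : List V → List (List V)
  | [] => [[]]
  | a :: t => (words t).flatMap (fun w => (List.range (w.length + 1)).map (fun k => w.insertIdx k a))

lemma insertIdx_indexOf_erase {a : V} : ∀ (w : List V), a ∈ w →
    (w.erase a).insertIdx (w.idxOf a) a = w := by
  intro w
  induction w with
  | nil => simp
  | cons b t ih =>
    intro hm
    by_cases hba : b = a
    · subst hba
      simp [List.idxOf_cons_self]
    · have hmt : a ∈ t := by
        rcases List.mem_cons.mp hm with h | h
        · exact absurd h.symm hba
        · exact h
      rw [List.erase_cons_tail (by simp [hba]), List.idxOf_cons_ne _ hba,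
        List.insertIdx_succ_cons, ih hmt]

lemma erase_insertIdx {a : V} : ∀ (k : ℕ) (w : List V), a ∉ w →
    (w.insertIdx k a).erase a = w := by
  intro k
  induction k with
  | zero => intro w _; simp [List.insertIdx_zero]
  | succ k ih =>
    intro w hw
    cases w with
    | nil => simp [List.insertIdx_succ_nil]
    | cons b t =>
      simp only [List.mem_cons, not_or] at hw
      have hba : ¬ b = a := fun h => hw.1 h.symm
      rw [List.insertIdx_succ_cons, List.erase_cons_tail (by simp [hba]), ih t hw.2]

lemma indexOf_insertIdx_self {a : V} : ∀ (k : ℕ) (w : List V), a ∉ w → k ≤ w.length →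
    (w.insertIdx k a).idxOf a = k := by
  intro k
  induction k with
  | zero => intro w _ _; simp [List.insertIdx_zero]
  | succ k ih =>
    intro w hw hk
    cases w with
    | nil => simp at hk
    | cons b t =>
      simp only [List.mem_cons, not_or] at hw
      rw [List.insertIdx_succ_cons, List.idxOf_cons_ne _ (fun h => hw.1 h.symm),
        ih t hw.2 (by simpa using hk)]

lemma indexOf_insertIdx_ne {a x : V} (hx : x ≠ a) : ∀ (k : ℕ) (w : List V), k ≤ w.length →
    (w.insertIdx k a).idxOf x
      = if w.idxOf x < k then w.idxOf x else w.idxOf x + 1 := by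
  intro k
  induction k with
  | zero =>
    intro w _
    simp [List.insertIdx_zero, List.idxOf_cons_ne _ (fun h => hx h.symm)]
  | succ k ih =>
    intro w hk
    cases w with
    | nil => simp at hk
    | cons b t =>
      rw [List.insertIdx_succ_cons]
      by_cases hxb : x = b
      · subst hxb
        simp [List.idxOf_cons_self]
      · rw [List.idxOf_cons_ne _ (fun h => hxb h.symm),
          List.idxOf_cons_ne _ (fun h => hxb h.symm), ih t (by simpa using hk)]
        by_cases hc : t.idxOf x < k
        · rw [if_pos hc, if_pos (by omega)]
        · rw [if_neg hc, if_neg (by omega)]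

lemma mem_words : ∀ (L w : List V), w ∈ words L ↔ w.Perm L := by
  intro L
  induction L with
  | nil => intro w; simp [words, List.perm_nil]
  | cons a t ih =>
    intro w
    simp only [words, List.mem_flatMap, List.mem_map, List.mem_range]
    constructor
    · rintro ⟨w', hw', k, hk, rfl⟩
      exact (List.perm_insertIdx a w' (by omega)).trans (((ih w').mp hw').cons a)
    · intro hp
      have ha : a ∈ w := hp.mem_iff.mpr (List.mem_cons_self)
      refine ⟨w.erase a, (ih _).mpr ?_, w.idxOf a, ?_, insertIdx_indexOf_erase w ha⟩
      · have := hp.erase a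
        rwa [List.erase_cons_head] at this
      · have h1 : w.idxOf a < w.length := List.idxOf_lt_length_iff.mpr ha
        have h2 : (w.erase a).length = w.length - 1 := List.length_erase_of_mem ha
        have h3 : 0 < w.length := by exact List.length_pos_iff.mpr (by rintro rfl; simp at ha)
        omega

lemma nodup_words : ∀ (L : List V), L.Nodup → (words L).Nodup := by
  intro L
  induction L with
  | nil => intro _; simp [words]
  | cons a t ih =>
    intro hnd
    have hat : a ∉ t := by simp at hnd; exact hnd.1
    have hndt : t.Nodup := hnd.of_cons
    rw [words, List.nodup_flatMap]
    constructor
    · intro w' hw'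
      have hperm : w'.Perm t := (mem_words t w').mp hw'
      have haw' : a ∉ w' := fun h => hat (hperm.mem_iff.mp h)
      refine List.nodup_range.map_on ?_
      intro k hk k' hk' hee
      simp only [List.mem_range] at hk hk'
      exact List.injOn_insertIdx_index_of_notMem w' a haw'
        (by simp only [Set.mem_setOf_eq]; omega) (by simp only [Set.mem_setOf_eq]; omega) hee
    · have hpw : (words t).Pairwise (· ≠ ·) := ih hndt
      refine hpw.imp_of_mem ?_
      intro w1 w2 h1 h2 hne
      have hp1 : w1.Perm t := (mem_words t w1).mp h1
      have hp2 : w2.Perm t := (mem_words t w2).mp h2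
      have ha1 : a ∉ w1 := fun h => hat (hp1.mem_iff.mp h)
      have ha2 : a ∉ w2 := fun h => hat (hp2.mem_iff.mp h)
      intro x hx1 hx2
      simp only [List.mem_map, List.mem_range] at hx1 hx2
      obtain ⟨k1, _, rfl⟩ := hx1
      obtain ⟨k2, _, heq⟩ := hx2
      apply hne
      rw [← erase_insertIdx k1 w1 ha1, ← heq, erase_insertIdx k2 w2 ha2]

end Words

section Transfer

def CompatB (Es : Finset (V × V)) (w : List V) : Prop :=
  ∀ e ∈ Es, e.1 ∈ w ∧ e.2 ∈ w ∧ w.idxOf e.1 < w.idxOf e.2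

instance (Es : Finset (V × V)) (w : List V) : Decidable (CompatB Es w) := by
  unfold CompatB; exact inferInstance

lemma length_wordOf (W : Finset V) (σ : Fin W.card ≃ W) : (wordOf W σ).length = W.card := by
  simp [wordOf]

lemma get_wordOf (W : Finset V) (σ : Fin W.card ≃ W) (i : Fin (wordOf W σ).length) :
    (wordOf W σ).get i = ((σ (Fin.cast (length_wordOf W σ) i) : W) : V) := by
  rw [List.get_eq_getElem]
  simp only [wordOf, List.getElem_map, List.getElem_finRange]
  rfl

lemma nodup_wordOf (W : Finset V) (σ : Fin W.card ≃ W) : (wordOf W σ).Nodup := by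
  refine List.Nodup.map ?_ (List.nodup_finRange _)
  exact fun i j h => σ.injective (Subtype.val_injective h)

lemma mem_wordOf (W : Finset V) (σ : Fin W.card ≃ W) (x : V) :
    x ∈ wordOf W σ ↔ x ∈ W := by
  simp only [wordOf, List.mem_map, List.mem_finRange, true_and]
  constructor
  · rintro ⟨i, rfl⟩; exact (σ i).2
  · intro hx; exact ⟨σ.symm ⟨x, hx⟩, by simp⟩

lemma toFinset_wordOf (W : Finset V) (σ : Fin W.card ≃ W) : (wordOf W σ).toFinset = W := by
  ext x; rw [List.mem_toFinset, mem_wordOf]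

def sigmaOf (W : Finset V) (w : List V) (hw : w.Nodup) (hW : w.toFinset = W) :
    Fin W.card ≃ W :=
  ((finCongr (by rw [← hW, List.toFinset_card_of_nodup hw] : W.card = w.length)).trans
    (hw.getEquiv w)).trans
    (Equiv.subtypeEquivRight (fun x => by rw [← List.mem_toFinset, hW]))

lemma sigmaOf_apply (W : Finset V) (w : List V) (hw : w.Nodup) (hW : w.toFinset = W)
    (i : Fin W.card) :
    ((sigmaOf W w hw hW i : W) : V)
      = w.get (Fin.cast (by rw [← hW, List.toFinset_card_of_nodup hw]) i) := rfl

lemma wordOf_sigmaOf (W : Finset V) (w : List V) (hw : w.Nodup) (hW : w.toFinset = W) :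
    wordOf W (sigmaOf W w hw hW) = w := by
  have hlen : (wordOf W (sigmaOf W w hw hW)).length = w.length := by
    rw [length_wordOf, ← hW, List.toFinset_card_of_nodup hw]
  apply List.ext_get hlen
  intro i h1 h2
  rw [get_wordOf, sigmaOf_apply]
  rfl

lemma isExt_iff (W : Finset V) (Es : Finset (V × V)) (σ : Fin W.card ≃ W) :
    IsExt W Es σ ↔ CompatB Es (wordOf W σ) := by
  set w := wordOf W σ with hw
  have hnd : w.Nodup := nodup_wordOf W σ
  unfold IsExt CompatB
  refine forall₂_congr (fun e _ => ?_)
  constructor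
  · rintro ⟨i, j, hij, ha, hb⟩
    have hi' : w.get (Fin.cast (length_wordOf W σ).symm i) = e.1 := by
      rw [get_wordOf]; simpa using ha
    have hj' : w.get (Fin.cast (length_wordOf W σ).symm j) = e.2 := by
      rw [get_wordOf]; simpa using hb
    refine ⟨hi' ▸ List.get_mem _ _, hj' ▸ List.get_mem _ _, ?_⟩
    rw [← hi', ← hj', List.get_idxOf hnd, List.get_idxOf hnd]
    exact hij
  · rintro ⟨h1, h2, hlt⟩
    have hi1 : w.idxOf e.1 < w.length := List.idxOf_lt_length_iff.mpr h1
    have hi2 : w.idxOf e.2 < w.length := List.idxOf_lt_length_iff.mpr h2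
    refine ⟨Fin.cast (length_wordOf W σ) ⟨w.idxOf e.1, hi1⟩,
      Fin.cast (length_wordOf W σ) ⟨w.idxOf e.2, hi2⟩, by simpa using hlt, ?_, ?_⟩
    · have := get_wordOf W σ ⟨w.idxOf e.1, hi1⟩
      rw [← this]
      exact List.idxOf_get hi1
    · have := get_wordOf W σ ⟨w.idxOf e.2, hi2⟩
      rw [← this]
      exact List.idxOf_get hi2

lemma transfer (L : List V) (hL : L.Nodup) (Es : Finset (V × V)) :
    PsiG L.toFinset Es
      = ((words L).map (fun w => if CompatB Es w then psi w else 0)).sum := by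
  rw [← List.sum_toFinset _ (nodup_words L hL)]
  unfold PsiG
  have key : ∀ w ∈ (words L).toFinset, w.Nodup ∧ w.toFinset = L.toFinset := by
    intro w hw
    have hperm : w.Perm L := (mem_words L w).mp (List.mem_toFinset.mp hw)
    exact ⟨hperm.nodup_iff.mpr hL, List.toFinset_eq_of_perm _ _ hperm⟩
  refine Finset.sum_bij' (i := fun σ _ => wordOf L.toFinset σ)
    (j := fun w hw => sigmaOf L.toFinset w (key w hw).1 (key w hw).2) ?_ ?_ ?_ ?_ ?_
  · intro σ _
    rw [List.mem_toFinset, mem_words]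
    exact List.perm_of_nodup_nodup_toFinset_eq (nodup_wordOf _ _) hL (toFinset_wordOf _ _)
  · intro w hw
    exact Finset.mem_univ _
  · intro σ _
    apply Equiv.ext
    intro i
    apply Subtype.val_injective
    rw [sigmaOf_apply, get_wordOf]
    congr 1
  · intro w hw
    exact wordOf_sigmaOf _ _ _ _
  · intro σ _
    simp only [isExt_iff]

end Transfer

section Split

lemma poslt_cases (W : Finset V) (σ : Fin W.card ≃ W) {a b : V} (ha : a ∈ W) (hb : b ∈ W) :
    (∃ i j : Fin W.card, i < j ∧ ((σ i : W) : V) = a ∧ ((σ j : W) : V) = b)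
      ↔ σ.symm ⟨a, ha⟩ < σ.symm ⟨b, hb⟩ := by
  constructor
  · rintro ⟨i, j, hij, h1, h2⟩
    have hi : i = σ.symm ⟨a, ha⟩ := by
      rw [← σ.symm_apply_apply i]; congr 1; exact Subtype.ext h1
    have hj : j = σ.symm ⟨b, hb⟩ := by
      rw [← σ.symm_apply_apply j]; congr 1; exact Subtype.ext h2
    rw [← hi, ← hj]; exact hij
  · intro h
    exact ⟨σ.symm ⟨a, ha⟩, σ.symm ⟨b, hb⟩, h, by simp, by simp⟩

lemma split (W : Finset V) (F : Finset (V × V)) (a b : V) (ha : a ∈ W) (hb : b ∈ W)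
    (hab : a ≠ b) :
    PsiG W (insert (a, b) F) + PsiG W (insert (b, a) F) = PsiG W F := by
  unfold PsiG
  rw [← Finset.sum_add_distrib]
  refine Finset.sum_congr rfl (fun σ _ => ?_)
  have hiff : ∀ e : V × V, IsExt W (insert e F) σ ↔
      ((∃ i j : Fin W.card, i < j ∧ ((σ i : W) : V) = e.1 ∧ ((σ j : W) : V) = e.2)
        ∧ IsExt W F σ) := by
    intro e
    unfold IsExt
    exact Finset.forall_mem_insert _ _ _
  have hA := poslt_cases W σ ha hb
  have hB := poslt_cases W σ hb ha
  have hne : σ.symm ⟨a, ha⟩ ≠ σ.symm ⟨b, hb⟩ := by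
    intro h
    have h2 : (⟨a, ha⟩ : W) = ⟨b, hb⟩ := by simpa using congrArg σ h
    exact hab (by simpa using congrArg Subtype.val h2)
  rcases lt_trichotomy (σ.symm ⟨a, ha⟩) (σ.symm ⟨b, hb⟩) with h | h | h
  · by_cases hP : IsExt W F σ <;>
      simp [hiff (a, b), hiff (b, a), hA, hB, hP, h, not_lt.mpr (le_of_lt h)]
  · exact absurd h hne
  · by_cases hP : IsExt W F σ <;>
      simp [hiff (a, b), hiff (b, a), hA, hB, hP, h, not_lt.mpr (le_of_lt h)]

end Split

section Path

lemma list_sum_flatMap {α β : Type} (l : List α) (g : α → List β) (f : β → K V) :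
    ((l.flatMap g).map f).sum = (l.map (fun x => ((g x).map f).sum)).sum := by
  induction l with
  | nil => simp
  | cons a t ih => simp [ih]

lemma list_sum_range (n : ℕ) (f : ℕ → K V) :
    ((List.range n).map f).sum = ∑ k ∈ Finset.range n, f k := by
  induction n with
  | zero => simp
  | succ n ih => rw [List.range_succ, Finset.sum_range_succ, List.map_append, List.sum_append, ih]; simp

lemma compatB_insert (e : V × V) (F : Finset (V × V)) (w : List V) :
    CompatB (insert e F) w ↔
      (e.1 ∈ w ∧ e.2 ∈ w ∧ w.idxOf e.1 < w.idxOf e.2) ∧ CompatB F w := by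
  unfold CompatB
  exact Finset.forall_mem_insert _ _ _

variable (bd : V → V → V × V)

def pedges : List V → List (V × V)
  | [] => []
  | [_] => []
  | a :: b :: t => bd a b :: pedges (b :: t)

variable (hbd : ∀ a b : V, bd a b = (a, b) ∨ bd a b = (b, a))
include hbd

lemma mem_pedges : ∀ (q : List V) (e : V × V), e ∈ pedges bd q → e.1 ∈ q ∧ e.2 ∈ q := by
  intro q
  induction q with
  | nil => intro e he; simp [pedges] at he
  | cons a t ih =>
    intro e he
    cases t with
    | nil => simp [pedges] at he
    | cons b t' =>
      rw [pedges] at he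
      rcases List.mem_cons.mp he with h | h
      · subst h
        rcases hbd a b with h | h <;> rw [h] <;> simp
      · have := ih e h
        exact ⟨List.mem_cons_of_mem _ this.1, List.mem_cons_of_mem _ this.2⟩

lemma nodup_pedges : ∀ (q : List V), q.Nodup → (pedges bd q).Nodup := by
  intro q
  induction q with
  | nil => intro _; simp [pedges]
  | cons a t ih =>
    intro hnd
    cases t with
    | nil => simp [pedges]
    | cons b t' =>
      rw [pedges, List.nodup_cons]
      refine ⟨?_, ih hnd.of_cons⟩
      intro hmem
      have hends := mem_pedges bd hbd _ _ hmem
      have hanb : a ∉ b :: t' := by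
        intro h; simp only [List.nodup_cons] at hnd; exact hnd.1 h
      rcases hbd a b with h | h
      · rw [h] at hends; exact hanb hends.1
      · rw [h] at hends; exact hanb hends.2

lemma path_lemma : ∀ (q : List V), q.Nodup → q ≠ [] →
    PsiG q.toFinset (pedges bd q).toFinset
      = ((pedges bd q).map (fun e => (xv e.1 - xv e.2)⁻¹)).prod := by
  intro q
  induction q with
  | nil => intro _ h; exact absurd rfl h
  | cons l q' ih =>
    intro hnd _
    have hlq' : l ∉ q' := by simp only [List.nodup_cons] at hnd; exact hnd.1
    have hndq' : q'.Nodup := hnd.of_cons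
    cases q' with
    | nil =>
      rw [transfer _ hnd]
      simp [pedges, words, CompatB, List.range_succ]
    | cons m t =>
      have hq'ne : (m :: t) ≠ [] := by simp
      rw [pedges]
      rw [transfer _ hnd]
      have hw : words (l :: m :: t)
          = (words (m :: t)).flatMap
              (fun w => (List.range (w.length + 1)).map (fun k => w.insertIdx k l)) := rfl
      rw [hw, list_sum_flatMap]
      set F' := (pedges bd (m :: t)).toFinset with hF'
      have hkey : ∀ w' ∈ words (m :: t),
          (((List.range (w'.length + 1)).map (fun k => w'.insertIdx k l)).map
            (fun w => if CompatB (bd l m :: pedges bd (m :: t)).toFinset w then psi w else 0)).sum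
          = (if CompatB F' w' then psi w' else 0) * (xv (bd l m).1 - xv (bd l m).2)⁻¹ := by
        intro w' hw'
        have hperm : w'.Perm (m :: t) := (mem_words _ _).mp hw'
        have hndw' : w'.Nodup := hperm.nodup_iff.mpr hndq'
        have hlw' : l ∉ w' := fun h => hlq' (hperm.mem_iff.mp h)
        have hmw' : m ∈ w' := hperm.mem_iff.mpr (List.mem_cons_self)
        have hml : m ≠ l := fun h => hlq' (h ▸ List.mem_cons_self)
        rw [List.map_map, list_sum_range]
        simp only [Function.comp_apply, List.toFinset_cons, ← hF']
        have hAk : ∀ k, k ≤ w'.length →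
            (CompatB F' (w'.insertIdx k l) ↔ CompatB F' w') := by
          intro k hklen
          unfold CompatB
          refine forall₂_congr (fun e he => ?_)
          have hends := mem_pedges bd hbd (m :: t) e (by rwa [← List.mem_toFinset, ← hF'])
          have he1 : e.1 ≠ l := fun h => hlq' (h ▸ hends.1)
          have he2 : e.2 ≠ l := fun h => hlq' (h ▸ hends.2)
          have hm1 : e.1 ∈ w' := hperm.mem_iff.mpr hends.1
          have hm2 : e.2 ∈ w' := hperm.mem_iff.mpr hends.2
          rw [indexOf_insertIdx_ne he1 k w' hklen, indexOf_insertIdx_ne he2 k w' hklen]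
          have hmm1 : e.1 ∈ w'.insertIdx k l := (List.mem_insertIdx hklen).mpr (Or.inr hm1)
          have hmm2 : e.2 ∈ w'.insertIdx k l := (List.mem_insertIdx hklen).mpr (Or.inr hm2)
          simp only [hmm1, hmm2, hm1, hm2, true_and]
          split_ifs <;> omega
        rcases hbd l m with h | h
        · -- e0 = (l, m); condition ¬ (indexOf m < k); keyB
          rw [h]
          by_cases hC : CompatB F' w'
          · rw [if_pos hC]
            have hpt : ∀ k ∈ Finset.range (w'.length + 1),
                (if CompatB (insert (l, m) F') (w'.insertIdx k l)
                    then psi (w'.insertIdx k l) else 0)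
                  = (if w'.idxOf m < k then 0 else psi (w'.insertIdx k l)) := by
              intro k hk
              simp only [Finset.mem_range] at hk
              have hklen : k ≤ w'.length := by omega
              have hidxl : (w'.insertIdx k l).idxOf l = k :=
                indexOf_insertIdx_self k w' hlw' hklen
              have hidxm : (w'.insertIdx k l).idxOf m
                  = if w'.idxOf m < k then w'.idxOf m else w'.idxOf m + 1 :=
                indexOf_insertIdx_ne hml k w' hklen
              have hmemm : m ∈ w'.insertIdx k l := (List.mem_insertIdx hklen).mpr (Or.inr hmw')
              have hmeml : l ∈ w'.insertIdx k l := (List.mem_insertIdx hklen).mpr (Or.inl rfl)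
              have hLiff : CompatB (insert (l, m) F') (w'.insertIdx k l) ↔
                  (¬ w'.idxOf m < k) ∧ CompatB F' w' := by
                refine (compatB_insert _ _ _).trans ?_
                constructor
                · rintro ⟨⟨_, _, hlt⟩, hCF⟩
                  refine ⟨?_, (hAk k hklen).mp hCF⟩
                  simp only [hidxl, hidxm] at hlt
                  split_ifs at hlt <;> omega
                · rintro ⟨hk2, hCF⟩
                  refine ⟨⟨hmeml, hmemm, ?_⟩, (hAk k hklen).mpr hCF⟩
                  simp only [hidxl, hidxm]
                  split_ifs <;> omega
              by_cases hKm : w'.idxOf m < k <;> simp [hLiff, hC, hKm]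
            rw [Finset.sum_congr rfl hpt, keyB l m w' hndw' hlw' hmw']
          · rw [if_neg hC]
            have hpt : ∀ k ∈ Finset.range (w'.length + 1),
                (if CompatB (insert (l, m) F') (w'.insertIdx k l)
                    then psi (w'.insertIdx k l) else 0) = 0 := by
              intro k hk
              simp only [Finset.mem_range] at hk
              have hklen : k ≤ w'.length := by omega
              rw [if_neg]
              intro hX
              exact hC ((hAk k hklen).mp ((compatB_insert _ _ _).mp hX).2)
            rw [Finset.sum_congr rfl hpt]
            simp
        · -- e0 = (m, l); condition indexOf m < k; keyA
          rw [h]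
          by_cases hC : CompatB F' w'
          · rw [if_pos hC]
            have hpt : ∀ k ∈ Finset.range (w'.length + 1),
                (if CompatB (insert (m, l) F') (w'.insertIdx k l)
                    then psi (w'.insertIdx k l) else 0)
                  = (if w'.idxOf m < k then psi (w'.insertIdx k l) else 0) := by
              intro k hk
              simp only [Finset.mem_range] at hk
              have hklen : k ≤ w'.length := by omega
              have hidxl : (w'.insertIdx k l).idxOf l = k :=
                indexOf_insertIdx_self k w' hlw' hklen
              have hidxm : (w'.insertIdx k l).idxOf m
                  = if w'.idxOf m < k then w'.idxOf m else w'.idxOf m + 1 :=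
                indexOf_insertIdx_ne hml k w' hklen
              have hmemm : m ∈ w'.insertIdx k l := (List.mem_insertIdx hklen).mpr (Or.inr hmw')
              have hmeml : l ∈ w'.insertIdx k l := (List.mem_insertIdx hklen).mpr (Or.inl rfl)
              have hLiff : CompatB (insert (m, l) F') (w'.insertIdx k l) ↔
                  (w'.idxOf m < k) ∧ CompatB F' w' := by
                refine (compatB_insert _ _ _).trans ?_
                constructor
                · rintro ⟨⟨_, _, hlt⟩, hCF⟩
                  refine ⟨?_, (hAk k hklen).mp hCF⟩
                  simp only [hidxl, hidxm] at hlt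
                  split_ifs at hlt <;> omega
                · rintro ⟨hk2, hCF⟩
                  refine ⟨⟨hmemm, hmeml, ?_⟩, (hAk k hklen).mpr hCF⟩
                  simp only [hidxl, hidxm]
                  split_ifs <;> omega
              by_cases hKm : w'.idxOf m < k <;> simp [hLiff, hC, hKm]
            rw [Finset.sum_congr rfl hpt, keyA l m w' hndw' hlw' hmw']
          · rw [if_neg hC]
            have hpt : ∀ k ∈ Finset.range (w'.length + 1),
                (if CompatB (insert (m, l) F') (w'.insertIdx k l)
                    then psi (w'.insertIdx k l) else 0) = 0 := by
              intro k hk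
              simp only [Finset.mem_range] at hk
              have hklen : k ≤ w'.length := by omega
              rw [if_neg]
              intro hX
              exact hC ((hAk k hklen).mp ((compatB_insert _ _ _).mp hX).2)
            rw [Finset.sum_congr rfl hpt]
            simp
      rw [List.map_congr_left hkey, List.sum_map_mul_right, ← transfer _ hndq',
        ih hndq' hq'ne, List.map_cons, List.prod_cons]
      ring

lemma pedges_fst_ne_snd : ∀ (q : List V), q.Nodup → ∀ e ∈ pedges bd q, e.1 ≠ e.2 := by
  intro q
  induction q with
  | nil => intro _ e he; simp [pedges] at he
  | cons a t ih =>
    intro hnd e he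
    cases t with
    | nil => simp [pedges] at he
    | cons b t' =>
      rw [pedges] at he
      have hanb : a ∉ b :: t' := by
        simp only [List.nodup_cons] at hnd; exact hnd.1
      rcases List.mem_cons.mp he with h | h
      · subst h
        rcases hbd a b with h | h <;> rw [h] <;>
          exact fun hc => hanb (by simp_all)
      · exact ih hnd.of_cons e h

end Path

section Cycle

variable [Fintype V]

def dirE {n : ℕ} [NeZero n] (c : ZMod n → V) (d : ZMod n → Bool) (i : ZMod n) : V × V :=
  if d i then (c i, c (i + 1)) else (c (i + 1), c i)

def Edg {n : ℕ} [NeZero n] (c : ZMod n → V) (d : ZMod n → Bool) : Finset (V × V) :=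
  Finset.image (dirE c d) Finset.univ

lemma psiG_zero_of_all_false {n : ℕ} [NeZero n] (c : ZMod n ≃ V) (d : ZMod n → Bool)
    (hd : ∀ i, d i = false) :
    PsiG (Finset.univ : Finset V) (Edg c d) = 0 := by
  unfold PsiG
  refine Finset.sum_eq_zero (fun σ _ => ?_)
  rw [if_neg]
  intro hext
  set pos : ZMod n → ℕ := fun i => ((σ.symm ⟨c i, Finset.mem_univ _⟩ : Fin _) : ℕ) with hpos
  have hlt : ∀ i : ZMod n, pos (i + 1) < pos i := by
    intro i
    have hmem : dirE c d i ∈ Edg c d := Finset.mem_image_of_mem _ (Finset.mem_univ i)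
    have hdir : dirE c d i = (c (i + 1), c i) := by rw [dirE, hd i]; simp
    obtain ⟨k, l, hkl, h1, h2⟩ := hext _ hmem
    rw [hdir] at h1 h2
    have := (poslt_cases Finset.univ σ (Finset.mem_univ (c (i+1)))
      (Finset.mem_univ (c i))).mp ⟨k, l, hkl, h1, h2⟩
    exact this
  obtain ⟨i0, _, hmin⟩ := Finset.exists_min_image Finset.univ pos ⟨0, Finset.mem_univ 0⟩
  exact absurd (hlt i0) (not_lt.mpr (hmin (i0 + 1) (Finset.mem_univ _)))

def bdOf {n : ℕ} [NeZero n] (c : ZMod n ≃ V) (d : ZMod n → Bool) : V → V → V × V :=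
  fun x y => if (∃ j : ZMod n, x = c j ∧ y = c (j + 1) ∧ d j = true) then (x, y) else (y, x)

lemma bdOf_or {n : ℕ} [NeZero n] (c : ZMod n ≃ V) (d : ZMod n → Bool) :
    ∀ a b : V, bdOf c d a b = (a, b) ∨ bdOf c d a b = (b, a) := by
  intro a b
  unfold bdOf
  split_ifs <;> simp

lemma bdOf_spec {n : ℕ} [NeZero n] (c : ZMod n ≃ V) (d : ZMod n → Bool) (l : ZMod n) :
    bdOf c d (c l) (c (l + 1)) = dirE c d l := by
  unfold bdOf dirE
  by_cases hd : d l = true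
  · rw [if_pos ⟨l, rfl, rfl, hd⟩, if_pos hd]
  · rw [if_neg, if_neg hd]
    rintro ⟨j, hj1, hj2, hj3⟩
    exact hd ((c.injective hj1) ▸ hj3)

lemma pedges_range (bd : V → V → V × V) :
    ∀ (m : ℕ) (g : ℕ → V), pedges bd ((List.range (m + 1)).map g)
      = (List.range m).map (fun j => bd (g j) (g (j + 1))) := by
  intro m
  induction m with
  | zero => intro g; simp [pedges, List.range_succ]
  | succ m ih =>
    intro g
    have h1 : (List.range (m + 1 + 1)).map g
        = g 0 :: (List.range (m + 1)).map (g ∘ Nat.succ) := by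
      rw [List.range_succ_eq_map, List.map_cons, List.map_map]
    have h2 : (List.range (m + 1)).map (g ∘ Nat.succ)
        = g 1 :: (List.range m).map (g ∘ Nat.succ ∘ Nat.succ) := by
      rw [List.range_succ_eq_map, List.map_cons, List.map_map]
      rfl
    rw [h1, h2, pedges, ← h2, ih (g ∘ Nat.succ)]
    rw [List.range_succ_eq_map, List.map_cons, List.map_map]
    refine congrArg₂ _ rfl ?_
    refine List.map_congr_left (fun j _ => ?_)
    rfl

lemma list_toFinset_map' {α β : Type} [DecidableEq α] [DecidableEq β] (l : List α) (f : α → β) :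
    (l.map f).toFinset = l.toFinset.image f := by
  induction l with
  | nil => simp
  | cons a t ih => simp [ih]

lemma list_toFinset_range (m : ℕ) : (List.range m).toFinset = Finset.range m := by
  ext x
  simp [List.mem_toFinset, List.mem_range, Finset.mem_range]

lemma main_cycle {n : ℕ} (hn : 3 ≤ n) (c : ZMod n ≃ V) (d : ZMod n → Bool) :
    haveI : NeZero n := ⟨by omega⟩
    NG (Finset.univ : Finset V) (Edg c d)
      = ∑ i ∈ Finset.univ.filter (fun i : ZMod n => d i = true),
          (xv (c i) - xv (c (i + 1))) := by
  haveI : NeZero n := ⟨by omega⟩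
  have hone : (1 : ZMod n) ≠ 0 := by
    intro h
    have h2 := (ZMod.natCast_eq_zero_iff 1 n).mp (by exact_mod_cast h)
    have := Nat.le_of_dvd one_pos h2
    omega
  have htwo : (2 : ZMod n) ≠ 0 := by
    intro h
    have h2 := (ZMod.natCast_eq_zero_iff 2 n).mp (by exact_mod_cast h)
    have := Nat.le_of_dvd (by norm_num) h2
    omega
  have hcardV : Fintype.card V = n := by
    rw [← Fintype.card_congr c, ZMod.card]
  suffices H : ∀ k (d : ZMod n → Bool),
      (Finset.univ.filter (fun i : ZMod n => d i = true)).card = k →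
      NG (Finset.univ : Finset V) (Edg c d)
        = ∑ i ∈ Finset.univ.filter (fun i : ZMod n => d i = true),
            (xv (c i) - xv (c (i + 1))) by
    exact H _ d rfl
  intro k
  induction k with
  | zero =>
    intro d hd0
    have hfe : Finset.univ.filter (fun i : ZMod n => d i = true) = ∅ :=
      Finset.card_eq_zero.mp hd0
    have hdf : ∀ i, d i = false := by
      intro i
      by_contra h
      have hmem : i ∈ Finset.univ.filter (fun i : ZMod n => d i = true) := by
        simp only [Bool.not_eq_false] at h
        simp [h]
      rw [hfe] at hmem
      simp at hmem
    rw [hfe]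
    unfold NG
    rw [psiG_zero_of_all_false c d hdf]
    simp
  | succ k ihk =>
    intro d hd
    have hex : ∃ i, d i = true := by
      by_contra h
      push_neg at h
      have hemp : Finset.univ.filter (fun i : ZMod n => d i = true) = ∅ := by
        refine Finset.filter_eq_empty_iff.mpr ?_
        intro i _
        simp [h i]
      rw [hemp] at hd
      simp at hd
    obtain ⟨i, hi⟩ := hex
    set d' : ZMod n → Bool := Function.update d i false with hd'def
    set F : Finset (V × V) := Finset.image (dirE c d) (Finset.univ.erase i) with hFdef
    set a : V := c i with hadef
    set b : V := c (i + 1) with hbdef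
    have hab : a ≠ b := by
      intro h
      have h2 := c.injective h
      exact hone (by linear_combination h2.symm)
    have f1 : Edg c d = insert (a, b) F := by
      rw [Edg, ← Finset.insert_erase (Finset.mem_univ i), Finset.image_insert]
      congr 1
      rw [dirE, if_pos hi]
    have hagree : ∀ j ∈ Finset.univ.erase i, dirE c d' j = dirE c d j := by
      intro j hj
      have hji : j ≠ i := (Finset.mem_erase.mp hj).1
      rw [dirE, dirE, hd'def, Function.update_of_ne hji]
    have f2 : Edg c d' = insert (b, a) F := by
      rw [Edg, ← Finset.insert_erase (Finset.mem_univ i), Finset.image_insert]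
      rw [Finset.image_congr hagree]
      congr 1
      rw [dirE, hd'def, Function.update_self]
      simp
      exact ⟨hbdef.symm, hadef.symm⟩
    have hdisj : ∀ j : ZMod n, j ≠ i → dirE c d j ≠ (a, b) ∧ dirE c d j ≠ (b, a) := by
      intro j hji
      constructor
      · intro h
        rw [dirE] at h
        split_ifs at h with hdj
        · have h1 : c j = a := congrArg Prod.fst h
          exact hji (c.injective h1)
        · have h1 : c (j + 1) = a := congrArg Prod.fst h
          have h2 : c j = b := congrArg Prod.snd h
          have e1 : j + 1 = i := c.injective h1
          have e2 : j = i + 1 := c.injective h2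
          apply htwo
          linear_combination e1 - e2
      · intro h
        rw [dirE] at h
        split_ifs at h with hdj
        · have h1 : c j = b := congrArg Prod.fst h
          have h2 : c (j + 1) = a := congrArg Prod.snd h
          have e1 : j = i + 1 := c.injective h1
          have e2 : j + 1 = i := c.injective h2
          apply htwo
          linear_combination e2 - e1
        · have h1 : c j = a := congrArg Prod.snd h
          exact hji (c.injective h1)
    have f3a : (a, b) ∉ F := by
      rw [hFdef]
      intro h
      obtain ⟨j, hj, hje⟩ := Finset.mem_image.mp h
      exact (hdisj j (Finset.mem_erase.mp hj).1).1 hje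
    have f3b : (b, a) ∉ F := by
      rw [hFdef]
      intro h
      obtain ⟨j, hj, hje⟩ := Finset.mem_image.mp h
      exact (hdisj j (Finset.mem_erase.mp hj).1).2 hje
    -- the path q
    set q : List V := (List.range n).map (fun k : ℕ => c ((i + 1) + (k : ZMod n))) with hqdef
    have hinj : ∀ k1, k1 < n → ∀ k2, k2 < n →
        c ((i + 1) + (k1 : ZMod n)) = c ((i + 1) + (k2 : ZMod n)) → k1 = k2 := by
      intro k1 h1 k2 h2 he
      have h3 := c.injective he
      have hz : ((k1 : ℕ) : ZMod n) = ((k2 : ℕ) : ZMod n) := by linear_combination h3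
      have h4 := congrArg ZMod.val hz
      rwa [ZMod.val_cast_of_lt h1, ZMod.val_cast_of_lt h2] at h4
    have hqnodup : q.Nodup := by
      rw [hqdef]
      refine List.Nodup.map_on ?_ List.nodup_range
      intro k1 h1 k2 h2 he
      exact hinj k1 (List.mem_range.mp h1) k2 (List.mem_range.mp h2) he
    have hqne : q ≠ [] := by
      rw [hqdef]
      intro h
      have h2 := congrArg List.length h
      simp only [List.length_map, List.length_range, List.length_nil] at h2
      omega
    have hqtf : q.toFinset = Finset.univ := by
      apply Finset.eq_univ_of_card
      rw [List.toFinset_card_of_nodup hqnodup, hqdef, hcardV]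
      simp
    have hn1 : n = (n - 1) + 1 := by omega
    have hped : pedges (bdOf c d) q
        = (List.range (n - 1)).map (fun j : ℕ => dirE c d ((i + 1) + (j : ZMod n))) := by
      have hq2 : q = (List.range ((n - 1) + 1)).map (fun k : ℕ => c ((i + 1) + (k : ZMod n))) := by
        rw [hqdef, ← hn1]
      rw [hq2, pedges_range]
      refine List.map_congr_left (fun j _ => ?_)
      have hcast : ((j + 1 : ℕ) : ZMod n) = (j : ZMod n) + 1 := by push_cast; ring
      rw [hcast, ← add_assoc]
      exact bdOf_spec c d ((i + 1) + (j : ZMod n))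
    have himg : (Finset.range (n - 1)).image (fun j : ℕ => (i + 1) + (j : ZMod n))
        = Finset.univ.erase i := by
      apply Finset.eq_of_subset_of_card_le
      · intro x hx
        obtain ⟨j, hj, rfl⟩ := Finset.mem_image.mp hx
        simp only [Finset.mem_range] at hj
        refine Finset.mem_erase.mpr ⟨?_, Finset.mem_univ _⟩
        intro h
        have hz : ((1 + j : ℕ) : ZMod n) = 0 := by push_cast; linear_combination h
        have h2 := (ZMod.natCast_eq_zero_iff (1 + j) n).mp hz
        have := Nat.le_of_dvd (by omega) h2
        omega
      · rw [Finset.card_erase_of_mem (Finset.mem_univ i), Finset.card_univ, ZMod.card]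
        rw [Finset.card_image_of_injOn]
        · simp
        · intro k1 h1 k2 h2 he
          simp only [Finset.coe_range, Set.mem_Iio] at h1 h2
          exact hinj k1 (by omega) k2 (by omega) (congrArg c he)
    have hpedtf : (pedges (bdOf c d) q).toFinset = F := by
      rw [hped, list_toFinset_map', list_toFinset_range, hFdef, ← himg, Finset.image_image]
      rfl
    -- path lemma application
    have hpath := path_lemma (bdOf c d) (bdOf_or c d) q hqnodup hqne
    rw [hqtf, hpedtf] at hpath
    have hprod1 : PsiG Finset.univ F * ∏ e ∈ F, (xv e.1 - xv e.2) = 1 := by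
      rw [hpath, ← hpedtf, List.prod_toFinset _ (nodup_pedges _ (bdOf_or c d) q hqnodup)]
      rw [← List.prod_map_mul]
      refine List.prod_eq_one (fun x hx => ?_)
      simp only [List.mem_map] at hx
      obtain ⟨e, he, rfl⟩ := hx
      have hne := pedges_fst_ne_snd _ (bdOf_or c d) q hqnodup e he
      exact inv_mul_cancel₀ (xv_sub_ne_zero hne)
    have hsp := split Finset.univ F a b (Finset.mem_univ a) (Finset.mem_univ b) hab
    have hinotd' : i ∉ Finset.univ.filter (fun j : ZMod n => d' j = true) := by
      simp [hd'def]
    have hfil : Finset.univ.filter (fun j : ZMod n => d j = true)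
        = insert i (Finset.univ.filter (fun j : ZMod n => d' j = true)) := by
      ext j
      simp only [Finset.mem_filter, Finset.mem_insert, Finset.mem_univ, true_and]
      by_cases hji : j = i
      · subst hji; simp [hi]
      · simp [hd'def, Function.update_of_ne hji, hji]
    have hcard' : (Finset.univ.filter (fun j : ZMod n => d' j = true)).card = k := by
      rw [hfil, Finset.card_insert_of_notMem hinotd'] at hd
      omega
    have hNGd' := ihk d' hcard'
    rw [hfil, Finset.sum_insert hinotd']
    unfold NG at hNGd' ⊢
    rw [f1, Finset.prod_insert f3a]
    rw [f2, Finset.prod_insert f3b] at hNGd'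
    linear_combination (xv a - xv b) * (∏ e ∈ F, (xv e.1 - xv e.2)) * hsp
      + (xv a - xv b) * hprod1 + hNGd'

end Cycle

section Graph

lemma no_loop {E : Finset (V × V)} (hacyc : Acyclic E) {a b : V} (h : (a, b) ∈ E) : a ≠ b := by
  rintro rfl
  exact hacyc a (Relation.TransGen.single h)

lemma no_digon {E : Finset (V × V)} (hacyc : Acyclic E) {a b : V} (h : (a, b) ∈ E) :
    (b, a) ∉ E := fun h2 =>
  hacyc a (Relation.TransGen.head h (Relation.TransGen.single h2))

lemma undirected_adj {E : Finset (V × V)} {a b : V} :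
    (undirected E).Adj a b ↔ a ≠ b ∧ ((a, b) ∈ E ∨ (b, a) ∈ E) := by
  rw [undirected, SimpleGraph.fromRel_adj]

instance decAdj (E : Finset (V × V)) : DecidableRel (undirected E).Adj := fun _ _ =>
  decidable_of_iff _ (undirected_adj).symm

variable [Fintype V]

lemma neighborFinset_eq {E : Finset (V × V)} (hacyc : Acyclic E) (v : V) :
    (undirected E).neighborFinset v
      = ((E.filter (fun e => e.1 = v)).image Prod.snd)
        ∪ ((E.filter (fun e => e.2 = v)).image Prod.fst) := by
  ext u
  rw [SimpleGraph.mem_neighborFinset, undirected_adj]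
  simp only [Finset.mem_union, Finset.mem_image, Finset.mem_filter]
  constructor
  · rintro ⟨hne, h | h⟩
    · exact Or.inl ⟨(v, u), ⟨h, rfl⟩, rfl⟩
    · exact Or.inr ⟨(u, v), ⟨h, rfl⟩, rfl⟩
  · rintro (⟨e, ⟨he, h1⟩, h2⟩ | ⟨e, ⟨he, h1⟩, h2⟩)
    · have he2 : e = (v, u) := Prod.ext h1 h2
      rw [he2] at he
      exact ⟨no_loop hacyc he, Or.inl he⟩
    · have he2 : e = (u, v) := Prod.ext h2 h1
      rw [he2] at he
      exact ⟨fun hx => no_loop hacyc he hx.symm, Or.inr he⟩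

lemma degree_two {E : Finset (V × V)} (hacyc : Acyclic E)
    (hdeg : ∀ v : V,
      (E.filter fun e => e.1 = v).card + (E.filter fun e => e.2 = v).card = 2) (v : V) :
    ((undirected E).neighborFinset v).card = 2 := by
  rw [neighborFinset_eq hacyc v, Finset.card_union_of_disjoint, Finset.card_image_of_injOn,
    Finset.card_image_of_injOn]
  · exact hdeg v
  · intro e1 h1 e2 h2 hee
    simp only [Finset.coe_filter, Set.mem_setOf_eq] at h1 h2
    first
    | exact Prod.ext (h1.2.trans h2.2.symm) hee
    | exact Prod.ext hee (h1.2.trans h2.2.symm)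
  · intro e1 h1 e2 h2 hee
    simp only [Finset.coe_filter, Set.mem_setOf_eq] at h1 h2
    first
    | exact Prod.ext (h1.2.trans h2.2.symm) hee
    | exact Prod.ext hee (h1.2.trans h2.2.symm)
  · rw [Finset.disjoint_left]
    intro u hu1 hu2
    simp only [Finset.mem_image, Finset.mem_filter] at hu1 hu2
    obtain ⟨e1, ⟨he1, hf1⟩, hs1⟩ := hu1
    obtain ⟨e2, ⟨he2, hf2⟩, hs2⟩ := hu2
    have h1 : e1 = (v, u) := Prod.ext hf1 hs1
    have h2 : e2 = (u, v) := Prod.ext hs2 hf2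
    rw [h1] at he1
    rw [h2] at he2
    exact no_digon hacyc he1 he2

end Graph

section Structure

variable [Fintype V]

lemma exists_cycle_structure (E : Finset (V × V))
    (hconn : (undirected E).Connected) (hacyc : Acyclic E)
    (hdeg : ∀ v : V,
      (E.filter fun e => e.1 = v).card + (E.filter fun e => e.2 = v).card = 2) :
    ∃ (n : ℕ) (_ : NeZero n) (c : ZMod n ≃ V) (d : ZMod n → Bool),
      3 ≤ n ∧ E = Edg (⇑c) d := by
  classical
  have hdeg2 : ∀ v, ((undirected E).neighborFinset v).card = 2 := degree_two hacyc hdeg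
  set G := undirected E with hG
  obtain ⟨v0⟩ := hconn.nonempty
  have hex0 : ∃ u, G.Adj v0 u := by
    have hne : (G.neighborFinset v0).Nonempty := by
      rw [← Finset.card_pos, hdeg2]; norm_num
    obtain ⟨u, hu⟩ := hne
    exact ⟨u, (SimpleGraph.mem_neighborFinset _ _ _).mp hu⟩
  obtain ⟨u0, hu0⟩ := hex0
  have hoth : ∀ v u, G.Adj v u →
      ∃ w, G.Adj v w ∧ w ≠ u ∧ ∀ x, G.Adj v x → x ≠ u → x = w := by
    intro v u h
    have hu : u ∈ G.neighborFinset v := (SimpleGraph.mem_neighborFinset _ _ _).mpr h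
    have hcard : ((G.neighborFinset v).erase u).card = 1 := by
      rw [Finset.card_erase_of_mem hu, hdeg2]
    obtain ⟨w, hw⟩ := Finset.card_eq_one.mp hcard
    have hwmem : w ∈ (G.neighborFinset v).erase u := hw ▸ Finset.mem_singleton_self w
    obtain ⟨hwne, hwadj⟩ := Finset.mem_erase.mp hwmem
    refine ⟨w, (SimpleGraph.mem_neighborFinset _ _ _).mp hwadj, hwne, ?_⟩
    intro x hx hxu
    have hxm : x ∈ (G.neighborFinset v).erase u :=
      Finset.mem_erase.mpr ⟨hxu, (SimpleGraph.mem_neighborFinset _ _ _).mpr hx⟩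
    rw [hw] at hxm
    exact Finset.mem_singleton.mp hxm
  set oth : V → V → V := fun v u => if h : G.Adj v u then (hoth v u h).choose else v0
    with hothdef
  have oth_spec : ∀ v u, G.Adj v u →
      G.Adj v (oth v u) ∧ oth v u ≠ u ∧ ∀ x, G.Adj v x → x ≠ u → x = oth v u := by
    intro v u h
    simp only [hothdef, dif_pos h]
    exact (hoth v u h).choose_spec
  set pf : ℕ → V × V := fun k => (fun p : V × V => (p.2, oth p.2 p.1))^[k] (v0, u0) with hpf
  set c' : ℕ → V := fun k => (pf k).1 with hc'
  have hpf2 : ∀ k, (pf k).2 = c' (k + 1) := by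
    intro k
    simp only [hc', hpf, Function.iterate_succ_apply']
  have hrec : ∀ k, c' (k + 2) = oth (c' (k + 1)) (c' k) := by
    intro k
    rw [← hpf2 (k + 1), ← hpf2 k]
    show (pf (k + 1)).2 = oth (pf k).2 (pf k).1
    simp only [hpf, Function.iterate_succ_apply']
  have hadjk : ∀ k, G.Adj (c' k) (c' (k + 1)) := by
    intro k
    induction k with
    | zero => exact hu0
    | succ k ih =>
      rw [hrec k]
      exact (oth_spec _ _ ih.symm).1
  have hne2 : ∀ k, c' (k + 2) ≠ c' k := by
    intro k
    rw [hrec k]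
    exact (oth_spec _ _ (hadjk k).symm).2.1
  have hnbrk : ∀ k, G.neighborFinset (c' (k + 1)) = {c' k, c' (k + 2)} := by
    intro k
    have h1 : c' k ∈ G.neighborFinset (c' (k + 1)) :=
      (SimpleGraph.mem_neighborFinset _ _ _).mpr (hadjk k).symm
    have h2 : c' (k + 2) ∈ G.neighborFinset (c' (k + 1)) :=
      (SimpleGraph.mem_neighborFinset _ _ _).mpr (hadjk (k + 1))
    refine (Finset.eq_of_subset_of_card_le ?_ ?_).symm
    · intro x hx
      rcases Finset.mem_insert.mp hx with h | h
      · rwa [h]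
      · rw [Finset.mem_singleton.mp h]; exact h2
    · rw [hdeg2, Finset.card_pair (hne2 k).symm]
  have hPex : ∃ p, ∃ j, j < p ∧ c' j = c' p := by
    have hninj : ¬ Function.Injective (fun k : Fin (Fintype.card V + 1) => c' k) := by
      intro hinj
      have h2 := Fintype.card_le_of_injective _ hinj
      simp at h2
    rw [Function.not_injective_iff] at hninj
    obtain ⟨x, y, hxy, hne⟩ := hninj
    rcases lt_or_gt_of_ne hne with h | h
    · exact ⟨y, x, (by exact_mod_cast h), hxy⟩
    · exact ⟨x, y, (by exact_mod_cast h), hxy.symm⟩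
  set p := Nat.find hPex with hpdef
  obtain ⟨j, hjp, hje⟩ := Nat.find_spec hPex
  rw [← hpdef] at hjp hje
  have hmin : ∀ m, m < p → ¬ ∃ i, i < m ∧ c' i = c' m := fun m hm => Nat.find_min hPex hm
  have hinjp : ∀ m1, m1 < p → ∀ m2, m2 < p → c' m1 = c' m2 → m1 = m2 := by
    intro m1 h1 m2 h2 he
    by_contra hne
    rcases Nat.lt_or_ge m1 m2 with h | h
    · exact hmin m2 h2 ⟨m1, h, he⟩
    · exact hmin m1 h1 ⟨m2, by omega, he.symm⟩
  have hj0 : j = 0 := by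
    by_contra hj
    have hj1 : 1 ≤ j := by omega
    have hp1 : p ≠ j + 1 := by
      intro h
      rw [h] at hje
      exact (hadjk j).ne hje
    have hp2 : p ≠ j + 2 := by
      intro h
      rw [h] at hje
      exact hne2 j hje.symm
    have hp3 : j + 3 ≤ p := by omega
    have hNp : c' (p - 1) ∈ G.neighborFinset (c' p) := by
      have h2 := hadjk (p - 1)
      rw [show p - 1 + 1 = p by omega] at h2
      exact (SimpleGraph.mem_neighborFinset _ _ _).mpr h2.symm
    rw [← hje] at hNp
    have hj' : c' j = c' ((j - 1) + 1) := by rw [show j - 1 + 1 = j by omega]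
    rw [hj', hnbrk (j - 1), show j - 1 + 2 = j + 1 by omega] at hNp
    rcases Finset.mem_insert.mp hNp with h | h
    · exact hmin (p - 1) (by omega) ⟨j - 1, by omega, h.symm⟩
    · rw [Finset.mem_singleton] at h
      exact hmin (p - 1) (by omega) ⟨j + 1, by omega, h.symm⟩
  rw [hj0] at hje hjp
  have hp3 : 3 ≤ p := by
    have h0 : 0 < p := hjp
    have h1 : p ≠ 1 := by
      intro h
      exact (hadjk 0).ne (by rw [← h]; simpa using hje)
    have h2 : p ≠ 2 := by
      intro h
      exact hne2 0 (by rw [← h]; simpa using hje.symm)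
    omega
  set S : Finset V := (Finset.range p).image c' with hSdef
  have hmemS : ∀ m, m < p → c' m ∈ S := fun m hm =>
    Finset.mem_image.mpr ⟨m, Finset.mem_range.mpr hm, rfl⟩
  have hc'p : c' p = c' 0 := hje.symm
  have hNin : ∀ k, k < p → ∀ u, G.Adj (c' k) u → u ∈ S := by
    intro k hk u hadju
    rcases Nat.eq_zero_or_pos k with hk0 | hk1
    · subst hk0
      have hN0 : G.neighborFinset (c' 0) = {c' (p - 1), c' (p + 1)} := by
        have h2 := hnbrk (p - 1)
        rw [show p - 1 + 1 = p by omega, show p - 1 + 2 = p + 1 by omega] at h2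
        rw [hje, h2]
      have hc1 : c' (p + 1) = c' 1 := by
        have h1 : c' 1 ∈ G.neighborFinset (c' 0) :=
          (SimpleGraph.mem_neighborFinset _ _ _).mpr (hadjk 0)
        rw [hN0] at h1
        rcases Finset.mem_insert.mp h1 with h | h
        · exfalso
          have := hinjp 1 (by omega) (p - 1) (by omega) h
          omega
        · exact (Finset.mem_singleton.mp h).symm
      have hu' : u ∈ G.neighborFinset (c' 0) :=
        (SimpleGraph.mem_neighborFinset _ _ _).mpr hadju
      rw [hN0] at hu'
      rcases Finset.mem_insert.mp hu' with h | h
      · rw [h]; exact hmemS (p - 1) (by omega)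
      · rw [Finset.mem_singleton.mp h, hc1]; exact hmemS 1 (by omega)
    · have h2 := hnbrk (k - 1)
      rw [show k - 1 + 1 = k by omega, show k - 1 + 2 = k + 1 by omega] at h2
      have hu' : u ∈ G.neighborFinset (c' k) :=
        (SimpleGraph.mem_neighborFinset _ _ _).mpr hadju
      rw [h2] at hu'
      rcases Finset.mem_insert.mp hu' with h | h
      · rw [h]; exact hmemS (k - 1) (by omega)
      · rw [Finset.mem_singleton.mp h]
        rcases Nat.lt_or_ge (k + 1) p with h3 | h3
        · exact hmemS (k + 1) h3
        · have hkp : k + 1 = p := by omega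
          rw [hkp, hc'p]; exact hmemS 0 (by omega)
  have hSuniv : S = Finset.univ := by
    have hwalk : ∀ (x y : V) (w : G.Walk x y), x ∈ S → y ∈ S := by
      intro x y w
      induction w with
      | nil => exact id
      | cons h w' ih =>
        intro hx
        apply ih
        obtain ⟨k, hk, hck⟩ := Finset.mem_image.mp hx
        exact hNin k (Finset.mem_range.mp hk) _ (hck ▸ h)
    refine Finset.eq_univ_of_forall (fun v => ?_)
    obtain ⟨w⟩ := hconn.preconnected (c' 0) v
    exact hwalk _ _ w (hmemS 0 (by omega))
  have hcardS : S.card = p := by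
    rw [hSdef, Finset.card_image_of_injOn, Finset.card_range]
    intro m1 h1 m2 h2
    exact hinjp m1 (by simpa using h1) m2 (by simpa using h2)
  have hpn : p = Fintype.card V := by
    rw [← hcardS, hSuniv, Finset.card_univ]
  haveI hNZ : NeZero p := ⟨by omega⟩
  set cf : ZMod p → V := fun z => c' z.val with hcf
  have hcfbij : Function.Bijective cf := by
    constructor
    · intro z1 z2 he
      exact ZMod.val_injective p (hinjp _ (ZMod.val_lt z1) _ (ZMod.val_lt z2) he)
    · intro v
      have hv : v ∈ S := by rw [hSuniv]; exact Finset.mem_univ v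
      obtain ⟨k, hk, hck⟩ := Finset.mem_image.mp hv
      have hkp : k < p := Finset.mem_range.mp hk
      refine ⟨(k : ZMod p), ?_⟩
      rw [hcf]
      simp only
      rw [ZMod.val_cast_of_lt hkp]
      exact hck
  set c : ZMod p ≃ V := Equiv.ofBijective cf hcfbij with hcdef
  have hceq : ∀ z, c z = cf z := fun z => rfl
  have hvaladd : ∀ z : ZMod p, (z + 1).val = if z.val + 1 = p then 0 else z.val + 1 := by
    intro z
    have h1 : (z + 1 : ZMod p) = ((z.val + 1 : ℕ) : ZMod p) := by
      push_cast
      rw [ZMod.natCast_zmod_val]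
    rcases Nat.lt_or_ge (z.val + 1) p with h | h
    · rw [if_neg (by omega), h1, ZMod.val_cast_of_lt h]
    · have hz : z.val + 1 = p := by have := ZMod.val_lt z; omega
      rw [if_pos hz, h1, hz]
      simp [ZMod.natCast_self]
  have hadjz : ∀ z : ZMod p, G.Adj (cf z) (cf (z + 1)) := by
    intro z
    rw [hcf]
    simp only
    rw [hvaladd z]
    split_ifs with h
    · have h2 := hadjk z.val
      rw [h] at h2
      rw [← hje] at h2
      exact h2
    · exact hadjk z.val
  have htwo0 : (2 : ZMod p) ≠ 0 := by
    intro h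
    have h2 := (ZMod.natCast_eq_zero_iff 2 p).mp (by exact_mod_cast h)
    have := Nat.le_of_dvd (by norm_num) h2
    omega
  have hnbz : ∀ z : ZMod p, G.neighborFinset (cf z) = {cf (z - 1), cf (z + 1)} := by
    intro z
    have h1 : cf (z - 1) ∈ G.neighborFinset (cf z) := by
      have h2 := hadjz (z - 1)
      rw [sub_add_cancel] at h2
      exact (SimpleGraph.mem_neighborFinset _ _ _).mpr h2.symm
    have h2 : cf (z + 1) ∈ G.neighborFinset (cf z) :=
      (SimpleGraph.mem_neighborFinset _ _ _).mpr (hadjz z)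
    refine (Finset.eq_of_subset_of_card_le ?_ ?_).symm
    · intro x hx
      rcases Finset.mem_insert.mp hx with h | h
      · rwa [h]
      · rw [Finset.mem_singleton.mp h]; exact h2
    · rw [hdeg2, Finset.card_pair]
      intro h
      have h3 := hcfbij.1 h
      exact htwo0 (by linear_combination - h3)
  set d : ZMod p → Bool := fun z => decide ((cf z, cf (z + 1)) ∈ E) with hddef
  refine ⟨p, hNZ, c, d, by omega, ?_⟩
  apply Finset.Subset.antisymm
  · rintro ⟨x, y⟩ he
    have hadjxy : G.Adj x y := undirected_adj.mpr ⟨no_loop hacyc he, Or.inl he⟩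
    obtain ⟨z, hz⟩ := hcfbij.2 x
    have hy : y ∈ G.neighborFinset (cf z) :=
      (SimpleGraph.mem_neighborFinset _ _ _).mpr (hz ▸ hadjxy)
    rw [hnbz] at hy
    rcases Finset.mem_insert.mp hy with h | h
    · have hw1 : (z - 1) + 1 = z := sub_add_cancel z 1
      have hdw : d (z - 1) = false := by
        rw [hddef]
        simp only [decide_eq_false_iff_not]
        intro hmem
        rw [hw1, hz] at hmem
        rw [h] at he
        exact no_digon hacyc he hmem
      refine Finset.mem_image.mpr ⟨z - 1, Finset.mem_univ _, ?_⟩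
      rw [dirE, if_neg (by simp [hdw]), hw1]
      exact Prod.ext hz h.symm
    · rw [Finset.mem_singleton] at h
      have hdz : d z = true := by
        rw [hddef]
        simp only [decide_eq_true_eq]
        rw [hz, ← h]
        exact he
      refine Finset.mem_image.mpr ⟨z, Finset.mem_univ _, ?_⟩
      rw [dirE, if_pos (by simp [hdz])]
      exact Prod.ext hz h.symm
  · intro e he
    obtain ⟨z, _, rfl⟩ := Finset.mem_image.mp he
    rw [dirE]
    split_ifs with hdz
    · rw [hddef] at hdz
      exact of_decide_eq_true hdz
    · have hor := (undirected_adj.mp (hadjz z)).2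
      rcases hor with h | h
      · exact absurd (by rw [hddef]; exact decide_eq_true h) hdz
      · exact h

end Structure

end OneCycle

/-- for a connected circuit-free graph all of whose vertices have
total degree 2, `N(G) = Σ_{v minimal} x_v - Σ_{v' maximal} x_{v'}`. -/
theorem NG_of_one_cycle (V : Type) [Fintype V] [DecidableEq V] (E : Finset (V × V))
    (hconn : (undirected E).Connected) (hacyc : Acyclic E)
    (hdeg : ∀ v : V,
      (E.filter fun e => e.1 = v).card + (E.filter fun e => e.2 = v).card = 2) :
    NG (Finset.univ : Finset V) E =
      (∑ v ∈ Finset.univ.filter (fun v : V => ∀ e ∈ E, e.2 ≠ v), xv v) -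
        ∑ v ∈ Finset.univ.filter (fun v : V => ∀ e ∈ E, e.1 ≠ v), xv v := by
  classical
  obtain ⟨n, hNZ, c, d, hn3, hE⟩ := OneCycle.exists_cycle_structure E hconn hacyc hdeg
  haveI := hNZ
  subst hE
  rw [OneCycle.main_cycle hn3 c d]
  have hminchar : ∀ z : ZMod n,
      (∀ e ∈ OneCycle.Edg (⇑c) d, e.2 ≠ c z) ↔ (d z = true ∧ d (z - 1) = false) := by
    intro z
    constructor
    · intro h
      constructor
      · by_contra hdz
        refine h (OneCycle.dirE (⇑c) d z) (Finset.mem_image_of_mem _ (Finset.mem_univ z)) ?_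
        rw [OneCycle.dirE, if_neg hdz]
      · by_contra hd1
        rw [Bool.not_eq_false] at hd1
        refine h (OneCycle.dirE (⇑c) d (z - 1))
          (Finset.mem_image_of_mem _ (Finset.mem_univ _)) ?_
        rw [OneCycle.dirE, if_pos hd1]
        simp only
        rw [sub_add_cancel]
    · rintro ⟨h1, h2⟩ e he heq
      obtain ⟨jj, _, rfl⟩ := Finset.mem_image.mp he
      rw [OneCycle.dirE] at heq
      split_ifs at heq with hdj
      · simp only at heq
        have hj2 : jj + 1 = z := c.injective heq
        have hj3 : jj = z - 1 := by linear_combination hj2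
        rw [hj3, h2] at hdj
        simp at hdj
      · simp only at heq
        have hj2 : jj = z := c.injective heq
        rw [hj2] at hdj
        exact hdj h1
  have hmaxchar : ∀ z : ZMod n,
      (∀ e ∈ OneCycle.Edg (⇑c) d, e.1 ≠ c z) ↔ (d z = false ∧ d (z - 1) = true) := by
    intro z
    constructor
    · intro h
      constructor
      · by_contra hdz
        rw [Bool.not_eq_false] at hdz
        refine h (OneCycle.dirE (⇑c) d z) (Finset.mem_image_of_mem _ (Finset.mem_univ z)) ?_
        rw [OneCycle.dirE, if_pos hdz]
      · by_contra hd1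
        refine h (OneCycle.dirE (⇑c) d (z - 1))
          (Finset.mem_image_of_mem _ (Finset.mem_univ _)) ?_
        rw [OneCycle.dirE, if_neg hd1]
        simp only
        rw [sub_add_cancel]
    · rintro ⟨h1, h2⟩ e he heq
      obtain ⟨jj, _, rfl⟩ := Finset.mem_image.mp he
      rw [OneCycle.dirE] at heq
      split_ifs at heq with hdj
      · simp only at heq
        have hj2 : jj = z := c.injective heq
        rw [hj2, h1] at hdj
        simp at hdj
      · simp only at heq
        have hj2 : jj + 1 = z := c.injective heq
        have hj3 : jj = z - 1 := by linear_combination hj2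
        rw [hj3, h2] at hdj
        exact hdj rfl
  have hs1 : (∑ v ∈ Finset.univ.filter (fun v : V => ∀ e ∈ OneCycle.Edg (⇑c) d, e.2 ≠ v), xv v)
      = ∑ z ∈ Finset.univ.filter (fun z : ZMod n => d z = true ∧ d (z - 1) = false),
          xv (c z) := by
    refine (Finset.sum_equiv c ?_ ?_).symm
    · intro z
      simp only [Finset.mem_filter, Finset.mem_univ, true_and]
      exact (hminchar z).symm
    · intro z _
      rfl
  have hs2 : (∑ v ∈ Finset.univ.filter (fun v : V => ∀ e ∈ OneCycle.Edg (⇑c) d, e.1 ≠ v), xv v)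
      = ∑ z ∈ Finset.univ.filter (fun z : ZMod n => d z = false ∧ d (z - 1) = true),
          xv (c z) := by
    refine (Finset.sum_equiv c ?_ ?_).symm
    · intro z
      simp only [Finset.mem_filter, Finset.mem_univ, true_and]
      exact (hmaxchar z).symm
    · intro z _
      rfl
  rw [hs1, hs2, Finset.sum_filter, Finset.sum_filter, Finset.sum_filter]
  have hre : (∑ z : ZMod n, if d (z - 1) = true then xv (c z) else 0)
      = ∑ z : ZMod n, (if d z = true then xv (c (z + 1)) else 0) := by
    refine (Finset.sum_equiv (Equiv.addRight (1 : ZMod n)) (by simp) ?_).symm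
    intro z _
    simp only [Equiv.coe_addRight]
    simp only [add_sub_cancel_right]
  have hptw : ∀ z : ZMod n, ((if d z = true ∧ d (z - 1) = false then xv (c z) else 0)
        - (if d z = false ∧ d (z - 1) = true then xv (c z) else 0))
      = (if d z = true then xv (c z) else 0) - (if d (z - 1) = true then xv (c z) else 0) := by
    intro z
    rcases hz : d z <;> rcases hz1 : d (z - 1) <;> simp [hz, hz1]
  rw [← Finset.sum_sub_distrib, Finset.sum_congr rfl (fun z _ => hptw z),
    Finset.sum_sub_distrib, hre, ← Finset.sum_sub_distrib]
  refine Finset.sum_congr rfl (fun z _ => ?_)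
  rcases hz : d z <;> simp [hz]
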